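/- The revised call-by-need λ-calculus is confluent (satisfies the Church–Rosser property): if e ↠ e₁ and e ↠ e₂, then there exists e₃ such that e₁ ↠ e₃ and e₂ ↠ e₃ (up to α-equivalence). -/

import Mathlib

namespace NeedCalc

/-- Terms of the pure λ-calculus, in de Bruijn representation (so that
    α-equivalent terms are syntactically equal). -/
inductive Tm : Type
  | bvar : Nat → Tm
  | lam  : Tm → Tm
  | app  : Tm → Tm → Tm
deriving DecidableEq

namespace Tm

/-- Shift the free de Bruijn indices ≥ k up by n. -/
def lift (n : Nat) : Nat → Tm → Tm
  | k, .bvar i => if i < k then .bvar i else .bvar (i + n)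
  | k, .lam b => .lam (lift n (k+1) b)
  | k, .app f a => .app (lift n k f) (lift n k a)

/-- Capture-avoiding substitution of `s` for the de Bruijn index `k`. -/
def subst : Tm → Nat → Tm → Tm
  | .bvar i, k, s => if i = k then lift k 0 s else if k < i then .bvar (i-1) else .bvar i
  | .lam b, k, s => .lam (subst b (k+1) s)
  | .app f a, k, s => .app (subst f k s) (subst a k s)

end Tm

/-- Values V ::= λx.e. -/
def IsValT (t : Tm) : Prop := ∃ b, t = Tm.lam b

/-- Answers A ::= V | ((λx.A) e). -/
inductive IsAnswer : Tm → Prop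
  | lam (b : Tm) : IsAnswer (.lam b)
  | app {a : Tm} (e : Tm) : IsAnswer a → IsAnswer (.app (.lam a) e)

/-- Evaluation contexts
    E ::= □ | (E e) | ((λx.E₁[x]) E) | ((λx.E) e).
    In `appNeed B E` the context `B` is the body context whose hole is
    filled with the variable bound by the λ (de Bruijn index `B.depth`),
    and the overall hole is in the argument context `E`. -/
inductive ECtx : Type
  | hole    : ECtx
  | appL    : ECtx → Tm → ECtx
  | appNeed : ECtx → ECtx → ECtx
  | appBody : ECtx → Tm → ECtx

/-- Number of λ-binders crossed between the root of the context and its hole. -/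
def ECtx.depth : ECtx → Nat
  | .hole => 0
  | .appL E _ => E.depth
  | .appNeed _ E => E.depth
  | .appBody E _ => E.depth + 1

/-- Plugging a term into the hole of an evaluation context. -/
def ECtx.plug : ECtx → Tm → Tm
  | .hole, t => t
  | .appL E e, t => .app (E.plug t) e
  | .appNeed B E, t => .app (.lam (B.plug (.bvar B.depth))) (E.plug t)
  | .appBody E e, t => .app (.lam (E.plug t)) e

/-- The notions of reduction of the revised call-by-need λ-calculus:
    β_need, lift, and assoc. -/
inductive Redn : Tm → Tm → Prop
  | beta (E : ECtx) (b : Tm) :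
      Redn (.app (.lam (E.plug (.bvar E.depth))) (.lam b))
           (Tm.subst (E.plug (.bvar E.depth)) 0 (.lam b))
  | liftR {a : Tm} (e e' : Tm) : IsAnswer a →
      Redn (.app (.app (.lam a) e) e')
           (.app (.lam (.app a (Tm.lift 1 0 e'))) e)
  | assoc (E : ECtx) {a : Tm} (e : Tm) : IsAnswer a →
      Redn (.app (.lam (E.plug (.bvar E.depth))) (.app (.lam a) e))
           (.app (.lam (.app (Tm.lift 1 0 (.lam (E.plug (.bvar E.depth)))) a)) e)

/-- One-step reduction: the compatible (contextual) closure of the notions of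
    reduction. -/
inductive Red1 : Tm → Tm → Prop
  | base {t t' : Tm} : Redn t t' → Red1 t t'
  | lam {b b' : Tm} : Red1 b b' → Red1 (.lam b) (.lam b')
  | appL {f f' : Tm} (a : Tm) : Red1 f f' → Red1 (.app f a) (.app f' a)
  | appR (f : Tm) {a a' : Tm} : Red1 a a' → Red1 (.app f a) (.app f a')

/-- Reflexive-transitive closure of one-step reduction. -/
def Reds : Tm → Tm → Prop := Relation.ReflTransGen Red1

/-- Standard reduction: contract only the redex in the hole of an evaluation
    context. -/
inductive StdStep : Tm → Tm → Prop
  | mk (E : ECtx) (r r' : Tm) : Redn r r' → StdStep (E.plug r) (E.plug r')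

end NeedCalc

namespace NeedCalc

theorem lift_zero (t : Tm) : ∀ k, Tm.lift 0 k t = t := by
  induction t with
  | bvar i => intro k; simp [Tm.lift]
  | lam b ih => intro k; simp [Tm.lift, ih]
  | app f a ihf iha => intro k; simp [Tm.lift, ihf, iha]

theorem lift_lift_le (n m : Nat) (t : Tm) :
    ∀ i k, i ≤ k → Tm.lift n (k + m) (Tm.lift m i t) = Tm.lift m i (Tm.lift n k t) := by
  induction t with
  | bvar x =>
    intro i k h
    simp only [Tm.lift]
    split_ifs <;> simp only [Tm.lift] <;> split_ifs <;>
      first | rfl | omega | (congr 1; omega) | (exfalso; omega)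
  | lam b ih =>
    intro i k h
    simp only [Tm.lift]
    rw [show k + m + 1 = (k+1) + m by omega, ih (i+1) (k+1) (by omega)]
  | app f a ihf iha =>
    intro i k h
    simp [Tm.lift, ihf _ _ h, iha _ _ h]

theorem lift_lift_add (m j c i : Nat) (t : Tm) (h : i ≤ j) :
    Tm.lift m (i + c) (Tm.lift j c t) = Tm.lift (j + m) c t := by
  induction t generalizing c with
  | bvar x =>
    simp only [Tm.lift]
    split_ifs <;> simp only [Tm.lift] <;> split_ifs <;>
      first | rfl | omega | (congr 1; omega) | (exfalso; omega)
  | lam b ih =>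
    simp only [Tm.lift]
    rw [show i + c + 1 = i + (c+1) by omega, ih (c+1)]
  | app f a ihf iha => simp [Tm.lift, ihf, iha]

theorem lift_subst (n : Nat) (t s : Tm) :
    ∀ j k, j ≤ k → Tm.lift n k (Tm.subst t j s) =
      Tm.subst (Tm.lift n (k+1) t) j (Tm.lift n (k - j) s) := by
  induction t with
  | bvar x =>
    intro j k h
    by_cases h1 : x = j
    · subst h1
      simp only [Tm.subst, Tm.lift, if_pos (show x < k + 1 by omega), if_pos rfl]
      have h5 := lift_lift_le n x s 0 (k - x) (Nat.zero_le _)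
      rw [show k - x + x = k by omega] at h5
      exact h5
    · simp only [Tm.subst, Tm.lift]
      split_ifs <;> simp only [Tm.subst, Tm.lift] <;> split_ifs <;>
        first | rfl | omega | (congr 1; omega) | (exfalso; omega)
  | lam b ih =>
    intro j k h
    simp only [Tm.subst, Tm.lift]
    rw [ih (j+1) (k+1) (by omega), show k + 1 - (j+1) = k - j by omega]
  | app f a ihf iha =>
    intro j k h
    simp [Tm.subst, Tm.lift, ihf _ _ h, iha _ _ h]

theorem subst_lift_cancel (m i : Nat) (hm : i < m) (v : Tm) :
    ∀ c s, Tm.subst (Tm.lift m c v) (c + i) s = Tm.lift (m-1) c v := by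
  induction v with
  | bvar x =>
    intro c s
    simp only [Tm.lift, Tm.subst]
    split_ifs <;> simp only [Tm.subst] <;> split_ifs <;>
      first | rfl | omega | (congr 1; omega) | (exfalso; omega)
  | lam b ih =>
    intro c s
    simp only [Tm.lift, Tm.subst]
    rw [show c + i + 1 = (c+1) + i by omega, ih (c+1)]
  | app f a ihf iha => intro c s; simp [Tm.lift, Tm.subst, ihf, iha]

theorem subst_lift (m : Nat) (t v : Tm) :
    ∀ c j, c ≤ j → Tm.subst (Tm.lift m c t) (j + m) v = Tm.lift m c (Tm.subst t j v) := by
  induction t with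
  | bvar x =>
    intro c j h
    by_cases h1 : x = j
    · subst h1
      simp only [Tm.lift, Tm.subst, if_neg (show ¬ x < c by omega), if_pos rfl]
      have h5 := lift_lift_add m x 0 c v h
      simp only [Nat.add_zero] at h5
      simp only [if_true]
      exact h5.symm
    · simp only [Tm.lift, Tm.subst]
      split_ifs <;> simp only [Tm.lift, Tm.subst] <;> split_ifs <;>
        first | rfl | omega | (congr 1; omega) | (exfalso; omega)
  | lam b ih =>
    intro c j h
    simp only [Tm.lift, Tm.subst]
    rw [show j + m + 1 = (j+1) + m by omega, ih (c+1) (j+1) (by omega)]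
  | app f a ihf iha => intro c j h; simp [Tm.lift, Tm.subst, ihf _ _ h, iha _ _ h]

theorem subst_subst (t u v : Tm) :
    ∀ i j, Tm.subst (Tm.subst t i u) (i + j) v =
      Tm.subst (Tm.subst t (i + j + 1) v) i (Tm.subst u j v) := by
  induction t with
  | bvar x =>
    intro i j
    by_cases h1 : x = i
    · subst h1
      simp only [Tm.subst, if_pos rfl, if_neg (show ¬ x = x + j + 1 by omega),
        if_neg (show ¬ x + j + 1 < x by omega), if_true]
      rw [show x + j = j + x by omega]
      exact subst_lift x u v 0 j (Nat.zero_le _)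
    · by_cases h2 : x = i + j + 1
      · subst h2
        simp only [Tm.subst, if_neg h1, if_pos rfl,
          if_pos (show i < i + j + 1 by omega), if_true,
          show i + j + 1 - 1 = i + j by omega]
        have h5 := subst_lift_cancel (i+j+1) i (by omega) v 0 (Tm.subst u j v)
        simp only [Nat.zero_add] at h5
        rw [show (i + j + 1 : Nat) - 1 = i + j by omega] at h5
        exact h5.symm
      · simp only [Tm.subst]
        split_ifs <;> simp only [Tm.subst] <;> split_ifs <;>
          first | rfl | omega | (congr 1; omega) | (exfalso; omega)
  | lam b ih =>
    intro i j
    simp only [Tm.subst]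
    rw [show i + j + 1 = (i+1) + j by omega, ih (i+1) j,
      show (i+1) + j + 1 = i + j + 1 + 1 by omega]
  | app f a ihf iha => intro i j; simp [Tm.subst, ihf, iha]

/-- `Needy n t` : `t` is of the form `E.plug (bvar (E.depth + n))` for an
evaluation context `E`, i.e. `t` "needs" the free variable `n`. -/
inductive Needy : Nat → Tm → Prop
  | bvar (n : Nat) : Needy n (.bvar n)
  | appL {n : Nat} {f : Tm} (a : Tm) : Needy n f → Needy n (.app f a)
  | appNeed {n : Nat} {b a : Tm} : Needy 0 b → Needy n a → Needy n (.app (.lam b) a)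
  | appBody {n : Nat} {b : Tm} (a : Tm) : Needy (n+1) b → Needy n (.app (.lam b) a)

theorem ectx_needy (E : ECtx) : ∀ k, Needy k (E.plug (.bvar (E.depth + k))) := by
  induction E with
  | hole => intro k; simpa [ECtx.plug, ECtx.depth] using Needy.bvar k
  | appL E e ih => intro k; exact Needy.appL e (ih k)
  | appNeed B E ihB ihE =>
    intro k
    exact Needy.appNeed (by simpa using ihB 0) (ihE k)
  | appBody E e ih =>
    intro k
    refine Needy.appBody e ?_
    simpa [ECtx.depth, show E.depth + 1 + k = E.depth + (k+1) by omega] using ih (k+1)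

theorem needy_ectx {k : Nat} {t : Tm} (h : Needy k t) :
    ∃ E : ECtx, t = E.plug (.bvar (E.depth + k)) := by
  induction h with
  | bvar n => exact ⟨.hole, by simp [ECtx.plug, ECtx.depth]⟩
  | appL a _ ih =>
    obtain ⟨E, rfl⟩ := ih
    exact ⟨.appL E a, rfl⟩
  | appNeed _ _ ihb iha =>
    obtain ⟨B, hB⟩ := ihb
    obtain ⟨E, hE⟩ := iha
    refine ⟨.appNeed B E, ?_⟩
    simp only [ECtx.plug, ECtx.depth, ← hE]
    rw [show B.depth + 0 = B.depth by omega] at hB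
    rw [← hB]
  | @appBody n b a _ ih =>
    obtain ⟨E, hE⟩ := ih
    refine ⟨.appBody E a, ?_⟩
    simp only [ECtx.plug, ECtx.depth]
    rw [show E.depth + 1 + n = E.depth + (n + 1) by omega, ← hE]

theorem not_needy_lam {n : Nat} {b : Tm} (h : Needy n (.lam b)) : False := by
  cases h

theorem answer_not_needy {t : Tm} (h : IsAnswer t) : ∀ n, ¬ Needy n t := by
  induction h with
  | lam b => intro n hn; exact not_needy_lam hn
  | app e _ ih =>
    intro n hn
    cases hn with
    | appL _ hf => exact not_needy_lam hf
    | appNeed hb _ => exact ih 0 hb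
    | appBody _ hb => exact ih _ hb

theorem needy_lift_lt {n : Nat} {t : Tm} (h : Needy n t) :
    ∀ m k, n < k → Needy n (Tm.lift m k t) := by
  induction h with
  | bvar n =>
    intro m k hk
    simpa [Tm.lift, if_pos hk] using Needy.bvar n
  | appL a _ ih => intro m k hk; exact Needy.appL _ (ih m k hk)
  | appNeed _ _ ihb iha =>
    intro m k hk
    exact Needy.appNeed (ihb m (k+1) (by omega)) (iha m k hk)
  | appBody a _ ih =>
    intro m k hk
    exact Needy.appBody _ (ih m (k+1) (by omega))

theorem needy_lift_ge {n : Nat} {t : Tm} (h : Needy n t) :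
    ∀ m k, k ≤ n → Needy (n + m) (Tm.lift m k t) := by
  induction h with
  | bvar n =>
    intro m k hk
    simpa [Tm.lift, if_neg (show ¬ n < k by omega)] using Needy.bvar (n+m)
  | appL a _ ih => intro m k hk; exact Needy.appL _ (ih m k hk)
  | appNeed hb _ _ iha =>
    intro m k hk
    exact Needy.appNeed (needy_lift_lt hb m (k+1) (by omega)) (iha m k hk)
  | appBody a _ ih =>
    intro m k hk
    refine Needy.appBody _ ?_
    have h2 := ih m (k+1) (by omega)
    rwa [Nat.add_right_comm] at h2

theorem needy_subst_gt {n : Nat} {t : Tm} (h : Needy n t) :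
    ∀ j s, n < j → Needy n (Tm.subst t j s) := by
  induction h with
  | bvar n =>
    intro j s hj
    simpa [Tm.subst, if_neg (show ¬ n = j by omega), if_neg (show ¬ j < n by omega)]
      using Needy.bvar n
  | appL a _ ih => intro j s hj; exact Needy.appL _ (ih j s hj)
  | appNeed _ _ ihb iha =>
    intro j s hj
    exact Needy.appNeed (ihb (j+1) s (by omega)) (iha j s hj)
  | appBody a _ ih =>
    intro j s hj
    exact Needy.appBody _ (ih (j+1) s (by omega))

theorem needy_subst_le {n : Nat} {t : Tm} (h : Needy (n+1) t) :
    ∀ j s, j ≤ n → Needy n (Tm.subst t j s) := by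
  generalize hm : n + 1 = m at h
  induction h generalizing n with
  | bvar x =>
    intro j s hj
    subst hm
    simpa [Tm.subst, if_neg (show ¬ n + 1 = j by omega), if_pos (show j < n + 1 by omega), hj]
      using Needy.bvar n
  | appL a _ ih => intro j s hj; exact Needy.appL _ (ih hm j s hj)
  | appNeed hb _ _ iha =>
    intro j s hj
    exact Needy.appNeed (needy_subst_gt hb (j+1) s (by omega)) (iha hm j s hj)
  | appBody a _ ih =>
    intro j s hj
    exact Needy.appBody _ (ih (by omega) (j+1) s (by omega))

theorem answer_lift {t : Tm} (h : IsAnswer t) : ∀ n k, IsAnswer (Tm.lift n k t) := by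
  induction h with
  | lam b => intro n k; exact IsAnswer.lam _
  | app e _ ih =>
    intro n k
    exact IsAnswer.app _ (ih n (k+1))

theorem answer_subst {t : Tm} (h : IsAnswer t) : ∀ j s, IsAnswer (Tm.subst t j s) := by
  induction h with
  | lam b => intro j s; exact IsAnswer.lam _
  | app e _ ih =>
    intro j s
    exact IsAnswer.app _ (ih (j+1) s)

/-- Parallel reduction (Tait–Martin-Löf style) for the call-by-need calculus. -/
inductive Par : Tm → Tm → Prop
  | bvar (i : Nat) : Par (.bvar i) (.bvar i)
  | lam {b b' : Tm} : Par b b' → Par (.lam b) (.lam b')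
  | app {f f' a a' : Tm} : Par f f' → Par a a' → Par (.app f a) (.app f' a')
  | beta {m m' b b' : Tm} : Needy 0 m → Par m m' → Par b b' →
      Par (.app (.lam m) (.lam b)) (Tm.subst m' 0 (.lam b'))
  | liftP {a a' e e₁ e' e₂ : Tm} : IsAnswer a → Par a a' → Par e e₁ → Par e' e₂ →
      Par (.app (.app (.lam a) e) e') (.app (.lam (.app a' (Tm.lift 1 0 e₂))) e₁)
  | assoc {m m' a a' e e₁ : Tm} : Needy 0 m → IsAnswer a → Par m m' → Par a a' → Par e e₁ →
      Par (.app (.lam m) (.app (.lam a) e))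
          (.app (.lam (.app (Tm.lift 1 0 (.lam m')) a')) e₁)

theorem par_refl (t : Tm) : Par t t := by
  induction t with
  | bvar i => exact Par.bvar i
  | lam b ih => exact Par.lam ih
  | app f a ihf iha => exact Par.app ihf iha

theorem par_lam_inv {b t : Tm} (h : Par (.lam b) t) :
    ∃ b', t = .lam b' ∧ Par b b' := by
  cases h with
  | lam hb => exact ⟨_, rfl, hb⟩

theorem par_lift {t t' : Tm} (h : Par t t') : ∀ n k, Par (Tm.lift n k t) (Tm.lift n k t') := by
  induction h with
  | bvar i => intro n k; simp only [Tm.lift]; split_ifs <;> exact Par.bvar _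
  | lam _ ih => intro n k; exact Par.lam (ih n (k+1))
  | app _ _ ihf iha => intro n k; exact Par.app (ihf n k) (iha n k)
  | @beta m m' b b' hm _ _ ihm ihb =>
    intro n k
    have h1 : Tm.lift n k (Tm.subst m' 0 (.lam b')) =
        Tm.subst (Tm.lift n (k+1) m') 0 (.lam (Tm.lift n (k+1) b')) := by
      rw [lift_subst n m' (.lam b') 0 k (Nat.zero_le _)]
      simp [Tm.lift]
    simp only [Tm.lift, h1]
    exact Par.beta (needy_lift_lt hm n (k+1) (by omega)) (ihm n (k+1)) (ihb n (k+1))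
  | @liftP a a' e e₁ e' e₂ ha _ _ _ iha ihe ihe' =>
    intro n k
    have h1 : Tm.lift n (k+1) (Tm.lift 1 0 e₂) = Tm.lift 1 0 (Tm.lift n k e₂) := by
      simpa using lift_lift_le n 1 e₂ 0 k (Nat.zero_le _)
    simp only [Tm.lift, h1]
    exact Par.liftP (answer_lift ha n (k+1)) (iha n (k+1)) (ihe n k) (ihe' n k)
  | @assoc m m' a a' e e₁ hm ha _ _ _ ihm iha ihe =>
    intro n k
    have h2 := Par.assoc (needy_lift_lt hm n (k+1) (by omega)) (answer_lift ha n (k+1))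
      (ihm n (k+1)) (iha n (k+1)) (ihe n k)
    have h1 := lift_lift_le n 1 m' 1 (k+1) (by omega)
    simp only [Tm.lift, Nat.zero_add] at h2 ⊢
    rw [h1]
    exact h2

theorem par_subst {t t' s s' : Tm} (h : Par t t') (hs : Par s s') :
    ∀ j, Par (Tm.subst t j s) (Tm.subst t' j s') := by
  induction h with
  | bvar i =>
    intro j
    simp only [Tm.subst]
    split_ifs <;> first | exact par_lift hs _ _ | exact Par.bvar _
  | lam _ ih => intro j; exact Par.lam (ih (j+1))
  | app _ _ ihf iha => intro j; exact Par.app (ihf j) (iha j)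
  | @beta m m' b b' hm _ _ ihm ihb =>
    intro j
    have h1 : Tm.subst (Tm.subst m' 0 (.lam b')) j s' =
        Tm.subst (Tm.subst m' (j+1) s') 0 (.lam (Tm.subst b' (j+1) s')) := by
      have := subst_subst m' (.lam b') s' 0 j
      simp only [Nat.zero_add] at this
      rw [this]
      simp [Tm.subst]
    simp only [Tm.subst, h1]
    exact Par.beta (needy_subst_gt hm (j+1) s (by omega)) (ihm (j+1)) (ihb (j+1))
  | @liftP a a' e e₁ e' e₂ ha _ _ _ iha ihe ihe' =>
    intro j
    have h1 : Tm.subst (Tm.lift 1 0 e₂) (j+1) s' = Tm.lift 1 0 (Tm.subst e₂ j s') := by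
      simpa using subst_lift 1 e₂ s' 0 j (Nat.zero_le _)
    simp only [Tm.subst, h1]
    exact Par.liftP (answer_subst ha (j+1) s) (iha (j+1)) (ihe j) (ihe' j)
  | @assoc m m' a a' e e₁ hm ha _ _ _ ihm iha ihe =>
    intro j
    have h2 := Par.assoc (needy_subst_gt hm (j+1) s (by omega)) (answer_subst ha (j+1) s)
      (ihm (j+1)) (iha (j+1)) (ihe j)
    have h1 := subst_lift 1 m' s' 1 (j+1) (by omega)
    simp only [Tm.subst, Tm.lift, Nat.zero_add] at h2 ⊢
    rw [h1]
    exact h2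

theorem needy_par {n : Nat} {t t' : Tm} (hn : Needy n t) (hp : Par t t') : Needy n t' := by
  induction hn generalizing t' with
  | bvar n =>
    cases hp with
    | bvar => exact Needy.bvar n
  | @appL n f a hf ih =>
    cases hp with
    | app hpf hpa => exact Needy.appL _ (ih hpf)
    | beta hm _ _ => exact (not_needy_lam hf).elim
    | liftP ha _ _ _ =>
      cases hf with
      | appL _ h => exact (not_needy_lam h).elim
      | appNeed hb _ => exact absurd hb (answer_not_needy ha 0)
      | appBody _ hb => exact absurd hb (answer_not_needy ha _)
    | assoc hm ha _ _ _ => exact (not_needy_lam hf).elim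
  | @appNeed n b a hb ha ihb iha =>
    cases hp with
    | app hpf hpa =>
      obtain ⟨b', rfl, hpb⟩ := par_lam_inv hpf
      exact Needy.appNeed (ihb hpb) (iha hpa)
    | beta _ _ _ => exact (not_needy_lam ha).elim
    | assoc _ hans _ _ _ =>
      cases ha with
      | appL _ h => exact (not_needy_lam h).elim
      | appNeed h0 _ => exact absurd h0 (answer_not_needy hans 0)
      | appBody _ h0 => exact absurd h0 (answer_not_needy hans _)
  | @appBody n b a hb ih =>
    cases hp with
    | app hpf hpa =>
      obtain ⟨b', rfl, hpb⟩ := par_lam_inv hpf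
      exact Needy.appBody _ (ih hpb)
    | beta hm hpm hpb =>
      exact needy_subst_le (ih hpm) 0 _ (Nat.zero_le _)
    | @assoc _ m' _ a' _ e₁ hm hans hpm hpa hpe =>
      have h1 : Needy (n+2) (Tm.lift 1 1 m') := by
        have := needy_lift_ge (ih hpm) 1 1 (by omega)
        rwa [show n + 1 + 1 = n + 2 by omega] at this
      have h2 : Tm.lift 1 0 (Tm.lam m') = Tm.lam (Tm.lift 1 1 m') := by
        simp [Tm.lift]
      rw [h2]
      exact Needy.appBody _ (Needy.appBody _ h1)

theorem answer_par {t t' : Tm} (ha : IsAnswer t) (hp : Par t t') : IsAnswer t' := by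
  induction ha generalizing t' with
  | lam b =>
    cases hp with
    | lam _ => exact IsAnswer.lam _
  | app e hans ih =>
    cases hp with
    | app hpf hpe =>
      obtain ⟨a', rfl, hpa⟩ := par_lam_inv hpf
      exact IsAnswer.app _ (ih hpa)
    | beta hm _ _ => exact absurd hm (answer_not_needy hans 0)
    | assoc hm _ _ _ _ => exact absurd hm (answer_not_needy hans 0)

/-- Size measure for strong induction. -/
def tsize : Tm → Nat
  | .bvar _ => 1
  | .lam b => tsize b + 1
  | .app f a => tsize f + tsize a + 1

theorem par_diamond_aux :
    ∀ n t u v, tsize t ≤ n → Par t u → Par t v → ∃ w, Par u w ∧ Par v w := by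
  intro n
  induction n with
  | zero =>
    intro t u v hs
    exfalso
    cases t <;> simp [tsize] at hs
  | succ n ih =>
    intro t u v hs h1 h2
    cases h1 with
    | bvar i =>
      cases h2 with
      | bvar => exact ⟨.bvar i, Par.bvar i, Par.bvar i⟩
    | @lam b b₁ hb₁ =>
      cases h2 with
      | lam hb₂ =>
        obtain ⟨w, hw1, hw2⟩ := ih b _ _ (by simp [tsize] at hs ⊢; omega) hb₁ hb₂
        exact ⟨.lam w, Par.lam hw1, Par.lam hw2⟩
    | @app f f₁ a a₁ hf₁ ha₁ =>
      cases h2 with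
      | app hf₂ ha₂ =>
        obtain ⟨wf, hwf1, hwf2⟩ := ih f _ _ (by simp [tsize] at hs ⊢; omega) hf₁ hf₂
        obtain ⟨wa, hwa1, hwa2⟩ := ih a _ _ (by simp [tsize] at hs ⊢; omega) ha₁ ha₂
        exact ⟨.app wf wa, Par.app hwf1 hwa1, Par.app hwf2 hwa2⟩
      | @beta m m₂ b b₂ hm pm pb =>
        obtain ⟨m₁, rfl, pm₁⟩ := par_lam_inv hf₁
        obtain ⟨b₁, rfl, pb₁⟩ := par_lam_inv ha₁
        obtain ⟨m₃, jm1, jm2⟩ := ih m _ _ (by simp [tsize] at hs ⊢; omega) pm₁ pm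
        obtain ⟨b₃, jb1, jb2⟩ := ih b _ _ (by simp [tsize] at hs ⊢; omega) pb₁ pb
        exact ⟨Tm.subst m₃ 0 (.lam b₃),
          Par.beta (needy_par hm pm₁) jm1 jb1,
          par_subst jm2 (Par.lam jb2) 0⟩
      | @liftP a a₂ e e₂ e' e₂' hans pa pe pe' =>
        cases hf₁ with
        | app hff hfe =>
          obtain ⟨a₁, rfl, pa₁⟩ := par_lam_inv hff
          obtain ⟨a₃, ja1, ja2⟩ := ih a _ _ (by simp [tsize] at hs ⊢; omega) pa₁ pa
          obtain ⟨e₃, je1, je2⟩ := ih e _ _ (by simp [tsize] at hs ⊢; omega) hfe pe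
          obtain ⟨e₃', je1', je2'⟩ := ih _ _ _ (by simp [tsize] at hs ⊢; omega) ha₁ pe'
          exact ⟨.app (.lam (.app a₃ (Tm.lift 1 0 e₃'))) e₃,
            Par.liftP (answer_par hans pa₁) ja1 je1 je1',
            Par.app (Par.lam (Par.app ja2 (par_lift je2' 1 0))) je2⟩
        | beta hm _ _ => exact absurd hm (answer_not_needy hans 0)
        | assoc hm _ _ _ _ => exact absurd hm (answer_not_needy hans 0)
      | @assoc m m₂ a a₂ e e₂ hm hans pm pa pe =>
        obtain ⟨m₁, rfl, pm₁⟩ := par_lam_inv hf₁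
        cases ha₁ with
        | app hg₁ hg₂ =>
          obtain ⟨a₁, rfl, pa₁⟩ := par_lam_inv hg₁
          obtain ⟨m₃, jm1, jm2⟩ := ih m _ _ (by simp [tsize] at hs ⊢; omega) pm₁ pm
          obtain ⟨a₃, ja1, ja2⟩ := ih a _ _ (by simp [tsize] at hs ⊢; omega) pa₁ pa
          obtain ⟨e₃, je1, je2⟩ := ih e _ _ (by simp [tsize] at hs ⊢; omega) hg₂ pe
          exact ⟨.app (.lam (.app (Tm.lift 1 0 (.lam m₃)) a₃)) e₃,
            Par.assoc (needy_par hm pm₁) (answer_par hans pa₁) jm1 ja1 je1,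
            Par.app (Par.lam (Par.app (par_lift (Par.lam jm2) 1 0) ja2)) je2⟩
        | beta h0 _ _ => exact absurd h0 (answer_not_needy hans 0)
        | assoc h0 _ _ _ _ => exact absurd h0 (answer_not_needy hans 0)
    | @beta m m₁ b b₁ hm pm pb =>
      cases h2 with
      | app hf₂ ha₂ =>
        obtain ⟨m₂, rfl, pm₂⟩ := par_lam_inv hf₂
        obtain ⟨b₂, rfl, pb₂⟩ := par_lam_inv ha₂
        obtain ⟨m₃, jm1, jm2⟩ := ih m _ _ (by simp [tsize] at hs ⊢; omega) pm pm₂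
        obtain ⟨b₃, jb1, jb2⟩ := ih b _ _ (by simp [tsize] at hs ⊢; omega) pb pb₂
        exact ⟨Tm.subst m₃ 0 (.lam b₃),
          par_subst jm1 (Par.lam jb1) 0,
          Par.beta (needy_par hm pm₂) jm2 jb2⟩
      | beta hm' pm' pb' =>
        obtain ⟨m₃, jm1, jm2⟩ := ih m _ _ (by simp [tsize] at hs ⊢; omega) pm pm'
        obtain ⟨b₃, jb1, jb2⟩ := ih b _ _ (by simp [tsize] at hs ⊢; omega) pb pb'
        exact ⟨Tm.subst m₃ 0 (.lam b₃),
          par_subst jm1 (Par.lam jb1) 0,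
          par_subst jm2 (Par.lam jb2) 0⟩
    | @liftP a a₁ e e₁ e' e₁' hans pa pe pe' =>
      cases h2 with
      | app hf₂ ha₂ =>
        cases hf₂ with
        | app hff hfe =>
          obtain ⟨a₂, rfl, pa₂⟩ := par_lam_inv hff
          obtain ⟨a₃, ja1, ja2⟩ := ih a _ _ (by simp [tsize] at hs ⊢; omega) pa pa₂
          obtain ⟨e₃, je1, je2⟩ := ih e _ _ (by simp [tsize] at hs ⊢; omega) pe hfe
          obtain ⟨e₃', je1', je2'⟩ := ih e' _ _ (by simp [tsize] at hs ⊢; omega) pe' ha₂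
          exact ⟨.app (.lam (.app a₃ (Tm.lift 1 0 e₃'))) e₃,
            Par.app (Par.lam (Par.app ja1 (par_lift je1' 1 0))) je1,
            Par.liftP (answer_par hans pa₂) ja2 je2 je2'⟩
        | beta hm _ _ => exact absurd hm (answer_not_needy hans 0)
        | assoc hm _ _ _ _ => exact absurd hm (answer_not_needy hans 0)
      | liftP hans' pa' pe2 pe2' =>
        obtain ⟨a₃, ja1, ja2⟩ := ih a _ _ (by simp [tsize] at hs ⊢; omega) pa pa'
        obtain ⟨e₃, je1, je2⟩ := ih e _ _ (by simp [tsize] at hs ⊢; omega) pe pe2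
        obtain ⟨e₃', je1', je2'⟩ := ih e' _ _ (by simp [tsize] at hs ⊢; omega) pe' pe2'
        exact ⟨.app (.lam (.app a₃ (Tm.lift 1 0 e₃'))) e₃,
          Par.app (Par.lam (Par.app ja1 (par_lift je1' 1 0))) je1,
          Par.app (Par.lam (Par.app ja2 (par_lift je2' 1 0))) je2⟩
    | @assoc m m₁ a a₁ e e₁ hm hans pm pa pe =>
      cases h2 with
      | app hf₂ ha₂ =>
        obtain ⟨m₂, rfl, pm₂⟩ := par_lam_inv hf₂
        cases ha₂ with
        | app hg₁ hg₂ =>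
          obtain ⟨a₂, rfl, pa₂⟩ := par_lam_inv hg₁
          obtain ⟨m₃, jm1, jm2⟩ := ih m _ _ (by simp [tsize] at hs ⊢; omega) pm pm₂
          obtain ⟨a₃, ja1, ja2⟩ := ih a _ _ (by simp [tsize] at hs ⊢; omega) pa pa₂
          obtain ⟨e₃, je1, je2⟩ := ih e _ _ (by simp [tsize] at hs ⊢; omega) pe hg₂
          exact ⟨.app (.lam (.app (Tm.lift 1 0 (.lam m₃)) a₃)) e₃,
            Par.app (Par.lam (Par.app (par_lift (Par.lam jm1) 1 0) ja1)) je1,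
            Par.assoc (needy_par hm pm₂) (answer_par hans pa₂) jm2 ja2 je2⟩
        | beta h0 _ _ => exact absurd h0 (answer_not_needy hans 0)
        | assoc h0 _ _ _ _ => exact absurd h0 (answer_not_needy hans 0)
      | assoc hm' hans' pm' pa' pe' =>
        obtain ⟨m₃, jm1, jm2⟩ := ih m _ _ (by simp [tsize] at hs ⊢; omega) pm pm'
        obtain ⟨a₃, ja1, ja2⟩ := ih a _ _ (by simp [tsize] at hs ⊢; omega) pa pa'
        obtain ⟨e₃, je1, je2⟩ := ih e _ _ (by simp [tsize] at hs ⊢; omega) pe pe'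
        exact ⟨.app (.lam (.app (Tm.lift 1 0 (.lam m₃)) a₃)) e₃,
          Par.app (Par.lam (Par.app (par_lift (Par.lam jm1) 1 0) ja1)) je1,
          Par.app (Par.lam (Par.app (par_lift (Par.lam jm2) 1 0) ja2)) je2⟩

theorem par_diamond {t u v : Tm} (h1 : Par t u) (h2 : Par t v) :
    ∃ w, Par u w ∧ Par v w :=
  par_diamond_aux (tsize t) t u v le_rfl h1 h2

theorem redn_par {t t' : Tm} (h : Redn t t') : Par t t' := by
  cases h with
  | beta E b =>
    have hn : Needy 0 (E.plug (.bvar E.depth)) := by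
      simpa using ectx_needy E 0
    exact Par.beta hn (par_refl _) (par_refl _)
  | liftR e e' ha => exact Par.liftP ha (par_refl _) (par_refl _) (par_refl _)
  | assoc E e ha =>
    have hn : Needy 0 (E.plug (.bvar E.depth)) := by
      simpa using ectx_needy E 0
    exact Par.assoc hn ha (par_refl _) (par_refl _) (par_refl _)

theorem red1_par {t t' : Tm} (h : Red1 t t') : Par t t' := by
  induction h with
  | base hr => exact redn_par hr
  | lam _ ih => exact Par.lam ih
  | appL a _ ih => exact Par.app ih (par_refl a)
  | appR f _ ih => exact Par.app (par_refl f) ih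

theorem reds_lam {b b' : Tm} (h : Reds b b') : Reds (.lam b) (.lam b') :=
  Relation.ReflTransGen.lift Tm.lam (fun _ _ hr => Red1.lam hr) _ _ h

theorem reds_app {f f' a a' : Tm} (hf : Reds f f') (ha : Reds a a') :
    Reds (.app f a) (.app f' a') :=
  Relation.ReflTransGen.trans
    (Relation.ReflTransGen.lift (fun t => Tm.app t a) (fun _ _ hr => Red1.appL a hr) _ _ hf)
    (Relation.ReflTransGen.lift (fun t => Tm.app f' t) (fun _ _ hr => Red1.appR f' hr) _ _ ha)

theorem par_reds {t t' : Tm} (h : Par t t') : Reds t t' := by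
  induction h with
  | bvar i => exact Relation.ReflTransGen.refl
  | lam _ ih => exact reds_lam ih
  | app _ _ ihf iha => exact reds_app ihf iha
  | @beta m m' b b' hm hpm _ ihm ihb =>
    refine Relation.ReflTransGen.tail (reds_app (reds_lam ihm) (reds_lam ihb)) ?_
    have hn : Needy 0 m' := needy_par hm hpm
    obtain ⟨E, hE⟩ := needy_ectx hn
    rw [Nat.add_zero] at hE
    have := Red1.base (Redn.beta E b')
    rwa [← hE] at this
  | @liftP a a' e e₁ e' e₂ hans hpa _ _ iha ihe ihe' =>
    refine Relation.ReflTransGen.tail (reds_app (reds_app (reds_lam iha) ihe) ihe') ?_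
    exact Red1.base (Redn.liftR e₁ e₂ (answer_par hans hpa))
  | @assoc m m' a a' e e₁ hm hans hpm hpa _ ihm iha ihe =>
    refine Relation.ReflTransGen.tail (reds_app (reds_lam ihm) (reds_app (reds_lam iha) ihe)) ?_
    have hn : Needy 0 m' := needy_par hm hpm
    obtain ⟨E, hE⟩ := needy_ectx hn
    rw [Nat.add_zero] at hE
    have := Red1.base (Redn.assoc E e₁ (answer_par hans hpa))
    rwa [← hE] at this

theorem parStar_reds {t t' : Tm} (h : Relation.ReflTransGen Par t t') : Reds t t' := by
  induction h with
  | refl => exact Relation.ReflTransGen.refl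
  | tail _ hp ih => exact Relation.ReflTransGen.trans ih (par_reds hp)

/-- the revised call-by-need λ-calculus is confluent
    (Church–Rosser); up to α-equivalence, which is syntactic equality in the
    de Bruijn representation. -/
theorem church_rosser (e e₁ e₂ : Tm) (h₁ : Reds e e₁) (h₂ : Reds e e₂) :
    ∃ e₃, Reds e₁ e₃ ∧ Reds e₂ e₃ := by
  have key : ∀ a b c : Tm, Par a b → Par a c →
      ∃ d, Relation.ReflGen Par b d ∧ Relation.ReflTransGen Par c d := by
    intro a b c hab hac
    obtain ⟨d, hd1, hd2⟩ := par_diamond hab hac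
    exact ⟨d, Relation.ReflGen.single hd1, Relation.ReflTransGen.single hd2⟩
  have h₁' : Relation.ReflTransGen Par e e₁ :=
    Relation.ReflTransGen.mono (r := Red1) (fun _ _ hr => red1_par hr) _ _ h₁
  have h₂' : Relation.ReflTransGen Par e e₂ :=
    Relation.ReflTransGen.mono (r := Red1) (fun _ _ hr => red1_par hr) _ _ h₂
  obtain ⟨d, hd1, hd2⟩ := Relation.church_rosser key h₁' h₂'
  exact ⟨d, parStar_reds hd1, parStar_reds hd2⟩

end NeedCalc
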